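/- arXiv:2208.13289 — 2 statements merged into one kernel-verified Lean document; each statement's English description precedes it below -/
import Mathlib

section
/- Let X be a measurable space, Y and H' real separable Hilbert spaces, and K : X → (Y →L H') a map assigning to each x a bounded operator K_x whose adjoint K_x* : H' → Y plays the role of pointwise evaluation. Assume x ↦ K_x(K_x* g) is Bochner ν-integrable for each g ∈ H' (guaranteed by the measurability of x ↦ ⟨K_t v, K_x w⟩ and the bound below), and assume the Hilbert–Schmidt bound Σ_j ‖K_x b_j‖²_{H'} ≤ κ² for every x ∈ X, where (b_j) is a Hilbert basis of Y. Let ν be a probability measure on X and define T_ν : H' → H' by T_ν g = ∫ K_x (K_x* g) dν(x). Then T_ν is a positive selfadjoint bounded linear operator with ‖T_ν‖ ≤ κ², and for every Hilbert basis (e_i) of H' one has Σ_i ⟨T_ν e_i, e_i⟩ ≤ κ² (so T_ν is trace class). -/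
open MeasureTheory RealInnerProductSpace

/-- Parseval identity with squared inner products, for a real Hilbert basis. -/
lemma parseval_sq_aux {ι E : Type*} [NormedAddCommGroup E] [InnerProductSpace ℝ E]
    (c : HilbertBasis ι ℝ E) (u : E) :
    HasSum (fun i => ⟪c i, u⟫ ^ 2) (‖u‖ ^ 2) := by
  have h := c.hasSum_inner_mul_inner u u
  rw [real_inner_self_eq_norm_sq] at h
  have hf : (fun i => ⟪c i, u⟫ ^ 2) = fun i => ⟪u, c i⟫ * ⟪c i, u⟫ := by
    funext i; rw [sq, real_inner_comm u (c i)]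
  rw [hf]; exact h

/-- Under Assumption 2.3 on the operator-valued kernel sections `K x : Y →L H'`
(Hilbert–Schmidt bound `Σ_j ‖K_x b_j‖² ≤ κ²`), the covariance operator
`T_ν g = ∫ K_x (K_x* g) dν(x)` of a probability measure `ν` is a positive selfadjoint
bounded operator with `‖T_ν‖ ≤ κ²`, and is trace class: for every Hilbert basis `(e i)`
of `H'`, `Σ_i ⟨T_ν e_i, e_i⟩ ≤ κ²`. -/
theorem covariance_operator_positive_traceClass
    {X Y H' : Type*} [MeasurableSpace X]
    [NormedAddCommGroup Y] [InnerProductSpace ℝ Y] [CompleteSpace Y]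
    [TopologicalSpace.SeparableSpace Y]
    [NormedAddCommGroup H'] [InnerProductSpace ℝ H'] [CompleteSpace H']
    [TopologicalSpace.SeparableSpace H']
    {J : Type*} [Countable J] (b : HilbertBasis J ℝ Y)
    (K : X → (Y →L[ℝ] H')) (κ : ℝ)
    (ν : Measure X) [IsProbabilityMeasure ν]
    (hmeas : ∀ (t : X) (v w : Y), Measurable fun x => ⟪K t v, K x w⟫)
    (hInt : ∀ g : H', Integrable (fun x => K x ((ContinuousLinearMap.adjoint (K x)) g)) ν)
    (hHS : ∀ x, Summable (fun j => ‖K x (b j)‖ ^ 2))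
    (hκ : ∀ x, (∑' j, ‖K x (b j)‖ ^ 2) ≤ κ ^ 2)
    (T : H' →L[ℝ] H')
    (hT : ∀ g : H', T g = ∫ x, K x ((ContinuousLinearMap.adjoint (K x)) g) ∂ν) :
    T.IsPositive ∧ ‖T‖ ≤ κ ^ 2 ∧
      ∀ {ι : Type*} (e : HilbertBasis ι ℝ H'),
        Summable (fun i => ⟪T (e i), e i⟫) ∧ (∑' i, ⟪T (e i), e i⟫) ≤ κ ^ 2 := by
  classical
  set A : X → (H' →L[ℝ] Y) := fun x => ContinuousLinearMap.adjoint (K x) with hA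
  -- Parseval expansion of `‖A x g‖²` along the basis `b`
  have hAsum : ∀ (x : X) (g : H'),
      HasSum (fun j => ⟪K x (b j), g⟫ ^ 2) (‖A x g‖ ^ 2) := by
    intro x g
    have h := parseval_sq_aux b (A x g)
    simpa only [hA, ContinuousLinearMap.adjoint_inner_right] using h
  -- pointwise quadratic bound
  have hA_sq_le : ∀ (x : X) (g : H'), ‖A x g‖ ^ 2 ≤ κ ^ 2 * ‖g‖ ^ 2 := by
    intro x g
    rw [← (hAsum x g).tsum_eq]
    calc ∑' j, ⟪K x (b j), g⟫ ^ 2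
        ≤ ∑' j, ‖K x (b j)‖ ^ 2 * ‖g‖ ^ 2 := by
          refine Summable.tsum_le_tsum (fun j => ?_) (hAsum x g).summable ((hHS x).mul_right _)
          have h1 := abs_real_inner_le_norm (K x (b j)) g
          nlinarith [abs_nonneg (⟪K x (b j), g⟫), sq_abs (⟪K x (b j), g⟫),
            norm_nonneg (K x (b j)), norm_nonneg g]
      _ = (∑' j, ‖K x (b j)‖ ^ 2) * ‖g‖ ^ 2 := tsum_mul_right
      _ ≤ κ ^ 2 * ‖g‖ ^ 2 := mul_le_mul_of_nonneg_right (hκ x) (sq_nonneg _)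
  -- the basic inner-product formula for T
  have hInner : ∀ g h : H', ⟪T g, h⟫ = ∫ x, ⟪A x g, A x h⟫ ∂ν := by
    intro g h
    rw [real_inner_comm, hT g, ← integral_inner (hInt g) h]
    congr 1
    funext x
    have h1 : ⟪A x h, A x g⟫ = ⟪h, K x (A x g)⟫ :=
      ContinuousLinearMap.adjoint_inner_left (K x) (A x g) h
    exact h1.symm.trans (real_inner_comm _ _)
  have hTgg : ∀ g : H', ⟪T g, g⟫ = ∫ x, ‖A x g‖ ^ 2 ∂ν := by
    intro g
    rw [hInner g g]
    congr 1
    funext x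
    exact real_inner_self_eq_norm_sq _
  -- integrability of the quadratic forms
  have hIntSq : ∀ g : H', Integrable (fun x => ‖A x g‖ ^ 2) ν := by
    intro g
    refine ((hInt g).inner_const g).congr (Filter.Eventually.of_forall fun x => ?_)
    show ⟪K x (A x g), g⟫ = ‖A x g‖ ^ 2
    have h1 : ⟪A x g, A x g⟫ = ⟪g, K x (A x g)⟫ :=
      ContinuousLinearMap.adjoint_inner_left (K x) (A x g) g
    exact (real_inner_comm _ _).trans (h1.symm.trans (real_inner_self_eq_norm_sq _))
  -- self-adjointness
  have hsym : IsSelfAdjoint T := by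
    rw [ContinuousLinearMap.isSelfAdjoint_iff_isSymmetric]
    intro g h
    show ⟪T g, h⟫ = ⟪g, T h⟫
    have h2 : ⟪g, T h⟫ = ∫ x, ⟪A x g, A x h⟫ ∂ν := by
      rw [real_inner_comm, hInner h g]
      congr 1
      funext x
      exact real_inner_comm _ _
    rw [hInner g h, h2]
  -- positivity
  have hpos : T.IsPositive := by
    refine ⟨ContinuousLinearMap.isSelfAdjoint_iff_isSymmetric.mp hsym, fun g => ?_⟩
    have : T.reApplyInnerSelf g = ⟪T g, g⟫ := by
      simp [ContinuousLinearMap.reApplyInnerSelf]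
    rw [this, hTgg g]
    exact integral_nonneg fun x => sq_nonneg _
  -- pointwise operator-norm bounds
  have hAnorm : ∀ (x : X) (g : H'), ‖A x g‖ ≤ |κ| * ‖g‖ := by
    intro x g
    have h := hA_sq_le x g
    calc ‖A x g‖ = Real.sqrt (‖A x g‖ ^ 2) := (Real.sqrt_sq (norm_nonneg _)).symm
      _ ≤ Real.sqrt (κ ^ 2 * ‖g‖ ^ 2) := Real.sqrt_le_sqrt h
      _ = |κ| * ‖g‖ := by
          rw [Real.sqrt_mul (sq_nonneg κ), Real.sqrt_sq_eq_abs, Real.sqrt_sq (norm_nonneg g)]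
  have hKnorm : ∀ (x : X) (u : Y), ‖K x u‖ ≤ |κ| * ‖u‖ := by
    intro x u
    have hAop : ‖A x‖ ≤ |κ| :=
      ContinuousLinearMap.opNorm_le_bound _ (abs_nonneg κ) (hAnorm x)
    have h1 : ‖K x‖ = ‖A x‖ := (ContinuousLinearMap.adjoint.norm_map (K x)).symm
    calc ‖K x u‖ ≤ ‖K x‖ * ‖u‖ := (K x).le_opNorm u
      _ ≤ |κ| * ‖u‖ := by
          rw [h1]; exact mul_le_mul_of_nonneg_right hAop (norm_nonneg u)
  -- norm bound for T
  have hTnorm : ‖T‖ ≤ κ ^ 2 := by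
    refine ContinuousLinearMap.opNorm_le_bound _ (sq_nonneg κ) fun g => ?_
    rw [hT g]
    calc ‖∫ x, K x (A x g) ∂ν‖ ≤ ∫ x, ‖K x (A x g)‖ ∂ν :=
          norm_integral_le_integral_norm _
      _ ≤ ∫ _x, κ ^ 2 * ‖g‖ ∂ν := by
          refine integral_mono (hInt g).norm (integrable_const _) fun x => ?_
          calc ‖K x (A x g)‖ ≤ |κ| * ‖A x g‖ := hKnorm x _
            _ ≤ |κ| * (|κ| * ‖g‖) :=
                mul_le_mul_of_nonneg_left (hAnorm x g) (abs_nonneg κ)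
            _ = κ ^ 2 * ‖g‖ := by rw [← mul_assoc, ← sq_abs, sq]
      _ = κ ^ 2 * ‖g‖ := by simp
  refine ⟨hpos, hTnorm, fun {ι} e => ?_⟩
  -- trace bound: finite partial sums are bounded by κ²
  have hterm : ∀ i : ι, ⟪T (e i), e i⟫ = ∫ x, ‖A x (e i)‖ ^ 2 ∂ν := fun i => hTgg (e i)
  have hnn : ∀ i : ι, 0 ≤ ⟪T (e i), e i⟫ := by
    intro i
    rw [hterm i]
    exact integral_nonneg fun x => sq_nonneg _
  -- pointwise: the finite sum over i of ‖A x (e i)‖² is at most κ²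
  have hptwise : ∀ (s : Finset ι) (x : X), ∑ i ∈ s, ‖A x (e i)‖ ^ 2 ≤ κ ^ 2 := by
    intro s x
    have hsum_eq : ∀ i : ι, ‖A x (e i)‖ ^ 2 = ∑' j, ⟪K x (b j), e i⟫ ^ 2 :=
      fun i => (hAsum x (e i)).tsum_eq.symm
    calc ∑ i ∈ s, ‖A x (e i)‖ ^ 2
        = ∑ i ∈ s, ∑' j, ⟪K x (b j), e i⟫ ^ 2 := by
          exact Finset.sum_congr rfl fun i _ => hsum_eq i
      _ = ∑' j, ∑ i ∈ s, ⟪K x (b j), e i⟫ ^ 2 :=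
          (Summable.tsum_finsetSum fun i _ => (hAsum x (e i)).summable).symm
      _ ≤ ∑' j, ‖K x (b j)‖ ^ 2 := by
          refine Summable.tsum_le_tsum (fun j => ?_)
            (summable_sum fun i _ => (hAsum x (e i)).summable) (hHS x)
          have hP : HasSum (fun i => ⟪e i, K x (b j)⟫ ^ 2) (‖K x (b j)‖ ^ 2) :=
            parseval_sq_aux e (K x (b j))
          have := sum_le_hasSum s (fun i _ => sq_nonneg (⟪e i, K x (b j)⟫)) hP
          calc ∑ i ∈ s, ⟪K x (b j), e i⟫ ^ 2
              = ∑ i ∈ s, ⟪e i, K x (b j)⟫ ^ 2 := by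
                exact Finset.sum_congr rfl fun i _ => by rw [real_inner_comm]
            _ ≤ ‖K x (b j)‖ ^ 2 := this
      _ ≤ κ ^ 2 := hκ x
  have hfin : ∀ s : Finset ι, ∑ i ∈ s, ⟪T (e i), e i⟫ ≤ κ ^ 2 := by
    intro s
    calc ∑ i ∈ s, ⟪T (e i), e i⟫
        = ∑ i ∈ s, ∫ x, ‖A x (e i)‖ ^ 2 ∂ν := Finset.sum_congr rfl fun i _ => hterm i
      _ = ∫ x, ∑ i ∈ s, ‖A x (e i)‖ ^ 2 ∂ν :=
          (integral_finset_sum s fun i _ => hIntSq (e i)).symm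
      _ ≤ ∫ _x, κ ^ 2 ∂ν := by
          refine integral_mono (integrable_finset_sum s fun i _ => hIntSq (e i))
            (integrable_const _) fun x => hptwise s x
      _ = κ ^ 2 := by simp
  have hsummable : Summable fun i => ⟪T (e i), e i⟫ := summable_of_sum_le hnn hfin
  exact ⟨hsummable, Summable.tsum_le_of_sum_le hsummable hfin⟩
end

section
/- Let p ≥ 0, s > 0 and 1 < q ≤ 2 + p with s(q−1) < p + q, and set θ = s(q−1)/(p+q) ∈ (0,1). Then there exists a constant C'' > 0 depending only on p, q, s and C' (explicitly C'' = (8C'²·s(q−1)/(p+q))^{(p+q)/(2(p+q)−2s(q−1))}·((p+q−s(q−1))/(s(q−1)))^{1/2}) such that: for all λ > 0, all C' > 0, and all nonnegative reals D, E, d, R, Θ, Ψ, ℓ, ℓ₁ satisfying (1/2)·D² + (λ/4)·E² ≤ 2C'²·λ·R^{(2p+2)/(p+q)}·D^{2θ} + 4C'²·λ·R^{(2p+2)/(p+q)}·d^{2θ} + 4d² + (ℓ²+1)·(ℓ₁Ψ + 2Θ)², one has both D ≤ 2(ℓ+1)(ℓ₁Ψ + 2Θ) + C''·R^{(p+1)/((p+q)−s(q−1))}·λ^{(p+q)/(2(p+q)−2s(q−1))}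 + 4C'·√λ·R^{(p+1)/(p+q)}·d^{θ} + 4d, and √λ·E ≤ 2(ℓ+1)(ℓ₁Ψ + 2Θ) + C''·R^{(p+1)/((p+q)−s(q−1))}·λ^{(p+q)/(2(p+q)−2s(q−1))} + 4C'·√λ·R^{(p+1)/(p+q)}·d^{θ} + 4d. -/
lemma sqrt_add_le' {x y : ℝ} (hx : 0 ≤ x) (hy : 0 ≤ y) :
    Real.sqrt (x + y) ≤ Real.sqrt x + Real.sqrt y := by
  have h : x + y ≤ (Real.sqrt x + Real.sqrt y) ^ 2 := by
    have h1 := Real.sq_sqrt hx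
    have h2 := Real.sq_sqrt hy
    nlinarith [Real.sqrt_nonneg x, Real.sqrt_nonneg y,
      mul_nonneg (Real.sqrt_nonneg x) (Real.sqrt_nonneg y)]
  calc Real.sqrt (x + y) ≤ Real.sqrt ((Real.sqrt x + Real.sqrt y) ^ 2) :=
        Real.sqrt_le_sqrt h
    _ = _ := Real.sqrt_sq (by positivity)

lemma sq_rpow (x e : ℝ) (hx : 0 ≤ x) : (x ^ e) ^ 2 = x ^ (2 * e) := by
  rw [← Real.rpow_natCast (x ^ e) 2, ← Real.rpow_mul hx]
  norm_num
  rw [mul_comm]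

lemma young_aux {θ c τ : ℝ} (hθ0 : 0 < θ) (hθ1 : θ < 1) (hc : 0 ≤ c) (hτ : 0 ≤ τ) :
    c * τ ^ (2 * θ) ≤ (1 / 4) * τ ^ 2 +
      (1 - θ) * ((4 * θ) ^ (θ / (1 - θ)) * c ^ (1 / (1 - θ))) := by
  have h1θ : (0:ℝ) < 1 - θ := by linarith
  have h4θ : (0:ℝ) < 4 * θ := by linarith
  have hp1 : (0:ℝ) ≤ τ ^ 2 / (4 * θ) := by positivity
  have hp2 : (0:ℝ) ≤ (c * (4 * θ) ^ θ) ^ (1 / (1 - θ)) := by positivity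
  have key := Real.geom_mean_le_arith_mean2_weighted hθ0.le h1θ.le hp1 hp2 (by ring)
  have e1 : ((c * (4 * θ) ^ θ) ^ (1 / (1 - θ))) ^ (1 - θ) = c * (4 * θ) ^ θ := by
    rw [← Real.rpow_mul (by positivity), one_div, inv_mul_cancel₀ h1θ.ne', Real.rpow_one]
  have e2 : (τ ^ 2 / (4 * θ)) ^ θ = τ ^ (2 * θ) / (4 * θ) ^ θ := by
    rw [Real.div_rpow (by positivity) h4θ.le, ← Real.rpow_natCast τ 2, ← Real.rpow_mul hτ]
    norm_num
  have e3 : (c * (4 * θ) ^ θ) ^ (1 / (1 - θ)) =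
      (4 * θ) ^ (θ / (1 - θ)) * c ^ (1 / (1 - θ)) := by
    rw [Real.mul_rpow hc (by positivity), ← Real.rpow_mul h4θ.le, mul_comm]
    congr 2
    field_simp
  rw [e1, e2] at key
  have h4θθ : (0:ℝ) < (4 * θ) ^ θ := Real.rpow_pos_of_pos h4θ θ
  have hL : τ ^ (2 * θ) / (4 * θ) ^ θ * (c * (4 * θ) ^ θ) = c * τ ^ (2 * θ) := by
    field_simp
  have hR : θ * (τ ^ 2 / (4 * θ)) = (1 / 4) * τ ^ 2 := by
    field_simp
  rw [hL, hR, e3] at key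
  exact key

/-- Deterministic core of the proof of Theorem 3.1: if
`(1/2)D² + (λ/4)E² ≤ 2C'²λR^((2p+2)/(p+q))D^(2θ) + 4C'²λR^((2p+2)/(p+q))d^(2θ) + 4d²
+ (ℓ²+1)(ℓ₁Ψ + 2Θ)²` with `θ = s(q−1)/(p+q) ∈ (0,1)`, then both `D` and `√λ·E` are
bounded by `2(ℓ+1)(ℓ₁Ψ+2Θ) + C''R^((p+1)/((p+q)−s(q−1)))λ^((p+q)/(2(p+q)−2s(q−1)))
+ 4C'√λR^((p+1)/(p+q))d^θ + 4d`, where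
`C'' = (8C'²s(q−1)/(p+q))^((p+q)/(2(p+q)−2s(q−1)))·((p+q−s(q−1))/(s(q−1)))^(1/2) > 0`. -/
theorem deterministic_core_bound
    (p q s : ℝ) (hp : 0 ≤ p) (hs : 0 < s) (hq1 : 1 < q) (hq2 : q ≤ 2 + p)
    (hsq : s * (q - 1) < p + q)
    (θ : ℝ) (hθ : θ = s * (q - 1) / (p + q))
    (C' : ℝ) (hC' : 0 < C')
    (C'' : ℝ)
    (hC'' : C'' =
      (8 * C' ^ 2 * s * (q - 1) / (p + q)) ^ ((p + q) / (2 * (p + q) - 2 * s * (q - 1))) *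
        ((p + q - s * (q - 1)) / (s * (q - 1))) ^ ((1 : ℝ) / 2)) :
    0 < C'' ∧
      ∀ lam D E d R Θ Ψ ℓ ℓ₁ : ℝ,
        0 < lam → 0 ≤ D → 0 ≤ E → 0 ≤ d → 0 ≤ R → 0 ≤ Θ → 0 ≤ Ψ → 0 ≤ ℓ → 0 ≤ ℓ₁ →
        (1 / 2) * D ^ 2 + (lam / 4) * E ^ 2 ≤
            2 * C' ^ 2 * lam * R ^ ((2 * p + 2) / (p + q)) * D ^ (2 * θ) +
              4 * C' ^ 2 * lam * R ^ ((2 * p + 2) / (p + q)) * d ^ (2 * θ) +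
              4 * d ^ 2 + (ℓ ^ 2 + 1) * (ℓ₁ * Ψ + 2 * Θ) ^ 2 →
        (D ≤ 2 * (ℓ + 1) * (ℓ₁ * Ψ + 2 * Θ) +
              C'' * R ^ ((p + 1) / ((p + q) - s * (q - 1))) *
                lam ^ ((p + q) / (2 * (p + q) - 2 * s * (q - 1))) +
              4 * C' * Real.sqrt lam * R ^ ((p + 1) / (p + q)) * d ^ θ + 4 * d) ∧
          Real.sqrt lam * E ≤ 2 * (ℓ + 1) * (ℓ₁ * Ψ + 2 * Θ) +
              C'' * R ^ ((p + 1) / ((p + q) - s * (q - 1))) *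
                lam ^ ((p + q) / (2 * (p + q) - 2 * s * (q - 1))) +
              4 * C' * Real.sqrt lam * R ^ ((p + 1) / (p + q)) * d ^ θ + 4 * d := by
  have hP : (0:ℝ) < p + q := by linarith
  have hS : (0:ℝ) < s * (q - 1) := mul_pos hs (by linarith)
  have hPS : (0:ℝ) < p + q - s * (q - 1) := by linarith
  have hθ0 : 0 < θ := by rw [hθ]; positivity
  have hθ1 : θ < 1 := by rw [hθ, div_lt_one hP]; exact hsq
  have h1θ : (0:ℝ) < 1 - θ := by linarith
  have hEl : (p + q) / (2 * (p + q) - 2 * s * (q - 1)) = 1 / (2 * (1 - θ)) := by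
    have h2 : 2 * (1 - θ) = (2 * (p + q) - 2 * s * (q - 1)) / (p + q) := by
      rw [hθ, eq_div_iff hP.ne']; field_simp
    rw [h2, one_div_div]
  have hER : (p + 1) / ((p + q) - s * (q - 1)) =
      ((2 * p + 2) / (p + q)) * (1 / (2 * (1 - θ))) := by
    rw [← hEl, div_mul_div_comm,
      div_eq_div_iff hPS.ne' (mul_pos hP (by linarith)).ne']
    ring
  have hb : 8 * C' ^ 2 * s * (q - 1) / (p + q) = (4 * θ) * (2 * C' ^ 2) := by
    rw [hθ]; field_simp; ring
  have hb2 : (p + q - s * (q - 1)) / (s * (q - 1)) = (1 - θ) / θ := by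
    rw [hθ, div_eq_div_iff hS.ne' (div_pos hS hP).ne']
    field_simp
  have hC''2 : C'' = ((4 * θ) * (2 * C' ^ 2)) ^ (1 / (2 * (1 - θ))) *
      ((1 - θ) / θ) ^ ((1:ℝ) / 2) := by
    rw [hC'', hb, hb2, hEl]
  have hC''pos : 0 < C'' := by rw [hC''2]; positivity
  refine ⟨hC''pos, ?_⟩
  intro lam D E d R Θ Ψ ℓ ℓ₁ hlam hD hE hd hR hΘ hΨ hℓ hℓ₁ h
  set a : ℝ := (2 * p + 2) / (p + q) with ha
  set eR : ℝ := (p + 1) / ((p + q) - s * (q - 1)) with heR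
  set el : ℝ := (p + q) / (2 * (p + q) - 2 * s * (q - 1)) with hel
  set X : ℝ := ℓ₁ * Ψ + 2 * Θ with hX
  have hX0 : 0 ≤ X := by positivity
  set c : ℝ := 2 * C' ^ 2 * lam * R ^ a with hc
  have hc0 : 0 ≤ c := by positivity
  set K : ℝ := (1 - θ) * ((4 * θ) ^ (θ / (1 - θ)) * c ^ (1 / (1 - θ))) with hK
  have hK0 : 0 ≤ K := by positivity
  have hY := young_aux hθ0 hθ1 hc0 hD
  rw [← hK] at hY
  set T2 : ℝ := 16 * C' ^ 2 * lam * R ^ a * d ^ (2 * θ) with hT2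
  set T3 : ℝ := 16 * d ^ 2 with hT3
  set T4 : ℝ := 4 * ((ℓ ^ 2 + 1) * X ^ 2) with hT4
  have hT20 : 0 ≤ T2 := by positivity
  have hT30 : 0 ≤ T3 := by positivity
  have hT40 : 0 ≤ T4 := by positivity
  set M : ℝ := 4 * K + T2 + T3 + T4 with hM
  clear_value M T4 T3 T2 K c X el eR a
  have hDM : D ^ 2 ≤ M := by
    have hE2 : 0 ≤ lam * E ^ 2 := by positivity
    rw [hM, hT2, hT3, hT4]; linarith [h, hY]
  have hEM : lam * E ^ 2 ≤ M := by
    have hD2 : 0 ≤ D ^ 2 := sq_nonneg D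
    rw [hM, hT2, hT3, hT4]; linarith [h, hY]
  -- the four square-root computations
  have hS1 : (C'' * R ^ eR * lam ^ el) ^ 2 = 4 * K := by
    rw [mul_pow, mul_pow, sq_rpow R eR hR, sq_rpow lam el hlam.le, hC''2, mul_pow,
      sq_rpow _ _ (by positivity), sq_rpow _ _ (by positivity)]
    have he2 : (2:ℝ) * (1 / (2 * (1 - θ))) = 1 / (1 - θ) := by
      rw [eq_div_iff h1θ.ne']; field_simp
    rw [he2, show (2:ℝ) * (1 / 2) = 1 by norm_num, Real.rpow_one]
    rw [show 2 * eR = a * (1 / (1 - θ)) by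
        rw [hER, show (2:ℝ) * (a * (1 / (2 * (1 - θ)))) =
          a * (2 * (1 / (2 * (1 - θ)))) by ring, he2],
      show 2 * el = 1 / (1 - θ) by rw [hEl, he2]]
    have hq1' : c ^ (1 / (1 - θ)) =
        (2 * C' ^ 2) ^ (1 / (1 - θ)) * lam ^ (1 / (1 - θ)) * R ^ (a * (1 / (1 - θ))) := by
      rw [hc, Real.mul_rpow (by positivity) (Real.rpow_nonneg hR a),
        Real.mul_rpow (by positivity) hlam.le, ← Real.rpow_mul hR]
    have hsplit2 : ((4 * θ) * (2 * C' ^ 2)) ^ (1 / (1 - θ)) =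
        ((4 * θ) * (4 * θ) ^ (θ / (1 - θ))) * (2 * C' ^ 2) ^ (1 / (1 - θ)) := by
      rw [Real.mul_rpow (by positivity) (by positivity)]
      congr 1
      conv_lhs => rw [show 1 / (1 - θ) = 1 + θ / (1 - θ) by field_simp; ring]
      rw [Real.rpow_add (by positivity), Real.rpow_one]
    rw [hsplit2, hK, hq1']
    field_simp
  have hs1 : Real.sqrt (4 * K) = C'' * R ^ eR * lam ^ el := by
    rw [← hS1, Real.sqrt_sq (by positivity)]
  have hS2 : (4 * C' * Real.sqrt lam * R ^ ((p + 1) / (p + q)) * d ^ θ) ^ 2 = T2 := by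
    rw [hT2, mul_pow, mul_pow, mul_pow, sq_rpow R _ hR, sq_rpow d θ hd,
      Real.sq_sqrt hlam.le, show (2:ℝ) * ((p + 1) / (p + q)) = a by rw [ha]; ring]
    ring
  have hs2 : Real.sqrt T2 = 4 * C' * Real.sqrt lam * R ^ ((p + 1) / (p + q)) * d ^ θ := by
    rw [← hS2, Real.sqrt_sq (by positivity)]
  have hs3 : Real.sqrt T3 = 4 * d := by
    rw [hT3, show (16:ℝ) * d ^ 2 = (4 * d) ^ 2 by ring, Real.sqrt_sq (by positivity)]
  have hs4 : Real.sqrt T4 ≤ 2 * (ℓ + 1) * X := by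
    have h4 : T4 ≤ (2 * (ℓ + 1) * X) ^ 2 := by
      have key : (2 * (ℓ + 1) * X) ^ 2 = 4 * ((ℓ ^ 2 + 1) * X ^ 2) + 8 * (ℓ * X ^ 2) := by
        ring
      rw [hT4, key]
      linarith [mul_nonneg hℓ (sq_nonneg X)]
    calc Real.sqrt T4 ≤ Real.sqrt ((2 * (ℓ + 1) * X) ^ 2) := Real.sqrt_le_sqrt h4
      _ = 2 * (ℓ + 1) * X := Real.sqrt_sq (by positivity)
  have hMs : Real.sqrt M ≤ 2 * (ℓ + 1) * X + C'' * R ^ eR * lam ^ el +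
      4 * C' * Real.sqrt lam * R ^ ((p + 1) / (p + q)) * d ^ θ + 4 * d := by
    have h4K0 : (0:ℝ) ≤ 4 * K := by linarith
    calc Real.sqrt M ≤ Real.sqrt (4 * K + T2 + T3) + Real.sqrt T4 := by
          rw [hM]; exact sqrt_add_le' (by linarith) hT40
      _ ≤ Real.sqrt (4 * K + T2) + Real.sqrt T3 + Real.sqrt T4 := by
          have := sqrt_add_le' (x := 4 * K + T2) (y := T3) (by linarith) hT30
          linarith
      _ ≤ Real.sqrt (4 * K) + Real.sqrt T2 + Real.sqrt T3 + Real.sqrt T4 := by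
          have := sqrt_add_le' (x := 4 * K) (y := T2) h4K0 hT20
          linarith
      _ ≤ _ := by rw [hs1, hs2, hs3]; linarith
  constructor
  · calc D = Real.sqrt (D ^ 2) := (Real.sqrt_sq hD).symm
      _ ≤ Real.sqrt M := Real.sqrt_le_sqrt hDM
      _ ≤ _ := hMs
  · calc Real.sqrt lam * E = Real.sqrt (lam * E ^ 2) := by
          rw [Real.sqrt_mul hlam.le, Real.sqrt_sq hE]
      _ ≤ Real.sqrt M := Real.sqrt_le_sqrt hEM
      _ ≤ _ := hMs
end
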